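/- For every n ≥ 1 there exists a transposition shuffle of order n of length n(n-1)/2. -/

import Mathlib

open Finset

/-- The random permutation determined by outcomes `ω`: the composition `s₁ ∘ s₂ ∘ ⋯ ∘ s_ℓ`,
where `sᵢ` is the transposition swapping `a i` and `b i` if `ω i = true` and the identity
otherwise (convention `(σ * τ) x = σ (τ x)`). -/
def lazyPerm {n ℓ : ℕ} (a b : Fin ℓ → Fin n) (ω : Fin ℓ → Bool) : Equiv.Perm (Fin n) :=
  (List.ofFn fun i => if ω i then Equiv.swap (a i) (b i) else 1).prod

/-- The weight `∏ᵢ pᵢ^{ωᵢ} (1-pᵢ)^{1-ωᵢ}` of an outcome `ω`. -/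
def lazyWeight {ℓ : ℕ} (p : Fin ℓ → ℝ) (ω : Fin ℓ → Bool) : ℝ :=
  ∏ i, if ω i then p i else 1 - p i

/-- `(aᵢ, bᵢ, pᵢ)ᵢ` is a transposition shuffle of order `n`: a lazy transposition sequence
(`aᵢ ≠ bᵢ`, `pᵢ ∈ [0,1]`) such that the induced distribution on `Sₙ` is uniform. -/
def IsTranspositionShuffle (n ℓ : ℕ) (a b : Fin ℓ → Fin n) (p : Fin ℓ → ℝ) : Prop :=
  (∀ i, a i ≠ b i) ∧ (∀ i, 0 ≤ p i ∧ p i ≤ 1) ∧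
    ∀ α : Equiv.Perm (Fin n),
      ∑ ω ∈ univ.filter fun ω : Fin ℓ → Bool => lazyPerm a b ω = α,
        lazyWeight p ω = 1 / (n.factorial : ℝ)

/-! ### Auxiliary development -/

section Aux

open Equiv Equiv.Perm

/-- The embedding `Fin n ↪ Fin (n+1)` by `succ`. -/
def succEmb' (n : ℕ) : Fin n ↪ Fin (n + 1) := ⟨Fin.succ, Fin.succ_injective n⟩

/-- Lifting permutations of `Fin n` to permutations of `Fin (n+1)` fixing `0`. -/
noncomputable def liftPerm (n : ℕ) : Perm (Fin n) →* Perm (Fin (n + 1)) :=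
  Equiv.Perm.viaEmbeddingHom (succEmb' n)

lemma liftPerm_apply_succ {n : ℕ} (σ : Perm (Fin n)) (i : Fin n) :
    liftPerm n σ i.succ = (σ i).succ :=
  Equiv.Perm.viaEmbedding_apply σ (succEmb' n) i

lemma liftPerm_apply_zero {n : ℕ} (σ : Perm (Fin n)) : liftPerm n σ 0 = 0 := by
  refine Equiv.Perm.viaEmbedding_apply_of_notMem σ (succEmb' n) 0 ?_
  rintro ⟨x, hx⟩
  exact Fin.succ_ne_zero x hx

lemma liftPerm_swap {n : ℕ} (x y : Fin n) :
    liftPerm n (Equiv.swap x y) = Equiv.swap x.succ y.succ := by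
  ext z
  induction z using Fin.cases with
  | zero =>
    rw [liftPerm_apply_zero, Equiv.swap_apply_of_ne_of_ne (Fin.succ_ne_zero x).symm
      (Fin.succ_ne_zero y).symm]
  | succ i =>
    rw [liftPerm_apply_succ, (Fin.succ_injective n).swap_apply]

lemma liftPerm_injective (n : ℕ) : Function.Injective (liftPerm n) :=
  Equiv.Perm.viaEmbeddingHom_injective (succEmb' n)

lemma lazyPerm_lift {n ℓ : ℕ} (a b : Fin ℓ → Fin n) (ω : Fin ℓ → Bool) :
    lazyPerm (fun i => (a i).succ) (fun i => (b i).succ) ω = liftPerm n (lazyPerm a b ω) := by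
  unfold lazyPerm
  have h : (List.ofFn fun i => if ω i then Equiv.swap ((fun i => (a i).succ) i)
        ((fun i => (b i).succ) i) else 1)
      = List.map (liftPerm n) (List.ofFn fun i => if ω i then Equiv.swap (a i) (b i) else 1) := by
    rw [List.map_ofFn]
    refine congrArg List.ofFn (funext fun i => ?_)
    simp only [Function.comp_apply]
    by_cases h : ω i <;> simp [h, liftPerm_swap]
  rw [h, ← map_list_prod]

lemma liftPerm_surj_on_stab {n : ℕ} (σ : Perm (Fin (n + 1))) (h : σ 0 = 0) :
    ∃ σ₀ : Perm (Fin n), liftPerm n σ₀ = σ := by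
  rcases hd : Equiv.Perm.decomposeFin σ with ⟨q, e⟩
  have hσ : Equiv.Perm.decomposeFin.symm (q, e) = σ := by
    rw [← hd]; exact Equiv.symm_apply_apply _ _
  have h1 : q = 0 := by rw [← h, ← hσ, Equiv.Perm.decomposeFin_symm_apply_zero]
  subst h1
  refine ⟨e, ?_⟩
  ext z
  induction z using Fin.cases with
  | zero => rw [liftPerm_apply_zero, h]
  | succ i =>
    rw [liftPerm_apply_succ, ← hσ, Equiv.Perm.decomposeFin_symm_apply_succ,
      Equiv.swap_self, Equiv.refl_apply]

/-- Length of the initial run of `true`s. -/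
def runLen : ∀ {n : ℕ}, (Fin n → Bool) → ℕ
  | 0, _ => 0
  | _ + 1, ω => if ω 0 then runLen (fun i => ω i.succ) + 1 else 0

lemma runLen_succ {n : ℕ} (ω : Fin (n + 1) → Bool) :
    runLen ω = if ω 0 then runLen (fun i => ω i.succ) + 1 else 0 := rfl

lemma runLen_le : ∀ {n : ℕ} (ω : Fin n → Bool), runLen ω ≤ n
  | 0, _ => le_refl 0
  | n + 1, ω => by
    rw [runLen_succ]
    split
    · exact Nat.succ_le_succ (runLen_le _)
    · exact Nat.zero_le _

lemma runLen_lt {n : ℕ} (ω : Fin n → Bool) : runLen ω < n + 1 :=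
  Nat.lt_succ_of_le (runLen_le ω)

/-- The chain permutation sends `0` back to the run length. -/
lemma chain_inv_apply_zero : ∀ (n : ℕ) (ω : Fin n → Bool),
    (lazyPerm Fin.castSucc Fin.succ ω)⁻¹ 0 = ⟨runLen ω, runLen_lt ω⟩
  | 0, ω => by
    simp only [lazyPerm, List.ofFn_zero, List.prod_nil, inv_one, Equiv.Perm.coe_one, id_eq]
    rfl
  | n + 1, ω => by
    have hsplit : lazyPerm Fin.castSucc Fin.succ ω =
        (if ω 0 then Equiv.swap (0 : Fin (n + 2)) 1 else 1) *
          liftPerm (n + 1) (lazyPerm Fin.castSucc Fin.succ (fun i => ω i.succ)) := by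
      unfold lazyPerm
      beta_reduce
      rw [List.ofFn_succ, List.prod_cons]
      have htail : (List.ofFn fun i : Fin n =>
            if ω i.succ then Equiv.swap i.succ.castSucc i.succ.succ else 1)
          = List.map (liftPerm (n + 1))
            (List.ofFn fun i : Fin n => if ω i.succ then Equiv.swap i.castSucc i.succ
              else 1) := by
        rw [List.map_ofFn]
        refine congrArg List.ofFn (funext fun i => ?_)
        simp only [Function.comp_apply]
        by_cases h : ω i.succ <;> simp [h, liftPerm_swap]
      rw [htail, ← map_list_prod]
      congr 1
    rw [hsplit, mul_inv_rev, Equiv.Perm.mul_apply, ← map_inv]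
    by_cases h : ω 0
    · have h1 : (if ω 0 then Equiv.swap (0 : Fin (n + 2)) 1 else 1)⁻¹ 0 = Fin.succ 0 := by
        simp [h, Equiv.swap_apply_left, Fin.succ_zero_eq_one]
      rw [h1, liftPerm_apply_succ, chain_inv_apply_zero n (fun i => ω i.succ)]
      refine Fin.ext ?_
      simp only [Fin.val_succ, Fin.succ_mk]
      rw [runLen_succ ω, if_pos h]
    · have h1 : (if ω 0 then Equiv.swap (0 : Fin (n + 2)) 1 else 1)⁻¹ 0 = 0 := by
        simp [h]
      rw [h1, liftPerm_apply_zero]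
      refine Fin.ext ?_
      simp only [Fin.val_zero]
      rw [runLen_succ ω, if_neg h]

lemma sum_lazyWeight {ℓ : ℕ} (p : Fin ℓ → ℝ) :
    ∑ ω : Fin ℓ → Bool, lazyWeight p ω = 1 :=
  calc ∑ ω : Fin ℓ → Bool, lazyWeight p ω
      = ∏ i, ∑ b : Bool, (if b then p i else 1 - p i) :=
        (Fintype.prod_sum (fun (i : Fin ℓ) (b : Bool) => if b then p i else 1 - p i)).symm
    _ = 1 := by simp

lemma lazyWeight_cons {n : ℕ} (p : Fin (n + 1) → ℝ) (b : Bool) (ω : Fin n → Bool) :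
    lazyWeight p (Fin.cons b ω) =
      (if b then p 0 else 1 - p 0) * lazyWeight (fun i => p i.succ) ω := by
  unfold lazyWeight
  rw [Fin.prod_univ_succ]
  simp

lemma runLen_cons {n : ℕ} (b : Bool) (ω : Fin n → Bool) :
    runLen (Fin.cons b ω) = if b then runLen ω + 1 else 0 := by
  rw [runLen_succ]
  simp

lemma sum_runLen : ∀ (n : ℕ) (q : ℕ → ℝ) (k : ℕ), k ≤ n →
    ∑ ω : Fin n → Bool, (if runLen ω = k then lazyWeight (fun i => q i) ω else 0)
      = (∏ j ∈ Finset.range k, q j) * (if k < n then 1 - q k else 1)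
  | 0, q, k, hk => by
    interval_cases k
    simp [runLen, lazyWeight]
  | n + 1, q, k, hk => by
    rw [← Equiv.sum_comp (Fin.consEquiv (fun _ : Fin (n + 1) => Bool))
      (fun ω => if runLen ω = k then lazyWeight (fun i => q i) ω else 0),
      Fintype.sum_prod_type, Fintype.sum_bool]
    have hce : ∀ (b : Bool) (ω' : Fin n → Bool),
        (Fin.consEquiv (fun _ : Fin (n + 1) => Bool)) (b, ω') = Fin.cons b ω' := fun _ _ => rfl
    have hwt : ∀ (b : Bool) (ω : Fin n → Bool),
        lazyWeight (fun i : Fin (n + 1) => q i) (Fin.cons b ω)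
          = (if b then q 0 else 1 - q 0) * lazyWeight (fun i : Fin n => q (i + 1)) ω := by
      intro b ω
      rw [lazyWeight_cons]
      simp [Fin.val_succ]
    match k with
    | 0 =>
      have htrue : ∀ ω : Fin n → Bool,
          (if runLen ((Fin.consEquiv fun _ : Fin (n+1) => Bool) (true, ω)) = 0
            then lazyWeight (fun i => q i) ((Fin.consEquiv fun _ => Bool) (true, ω)) else 0)
            = 0 := by
        intro ω
        simp only [hce, runLen_cons]
        simp
      have hfalse : ∀ ω : Fin n → Bool,
          (if runLen ((Fin.consEquiv fun _ : Fin (n+1) => Bool) (false, ω)) = 0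
            then lazyWeight (fun i => q i) ((Fin.consEquiv fun _ => Bool) (false, ω)) else 0)
            = (1 - q 0) * lazyWeight (fun i : Fin n => q (i + 1)) ω := by
        intro ω
        simp only [hce, runLen_cons, if_false, if_true, hwt]
        simp
      rw [Finset.sum_congr rfl (fun ω _ => htrue ω),
        Finset.sum_congr rfl (fun ω _ => hfalse ω), Finset.sum_const_zero, zero_add,
        ← Finset.mul_sum, sum_lazyWeight]
      simp
    | k + 1 =>
      have htrue : ∀ ω : Fin n → Bool,
          (if runLen ((Fin.consEquiv fun _ : Fin (n+1) => Bool) (true, ω)) = k + 1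
            then lazyWeight (fun i => q i) ((Fin.consEquiv fun _ => Bool) (true, ω)) else 0)
            = q 0 * (if runLen ω = k then lazyWeight (fun i : Fin n => q (i + 1)) ω else 0) := by
        intro ω
        simp only [hce, runLen_cons, if_true, hwt, Nat.add_right_cancel_iff]
        split <;> simp
      have hfalse : ∀ ω : Fin n → Bool,
          (if runLen ((Fin.consEquiv fun _ : Fin (n+1) => Bool) (false, ω)) = k + 1
            then lazyWeight (fun i => q i) ((Fin.consEquiv fun _ => Bool) (false, ω)) else 0)
            = 0 := by
        intro ω
        simp only [hce, runLen_cons]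
        simp
      rw [Finset.sum_congr rfl (fun ω _ => htrue ω),
        Finset.sum_congr rfl (fun ω _ => hfalse ω), Finset.sum_const_zero, add_zero,
        ← Finset.mul_sum, sum_runLen n (fun m => q (m + 1)) k (Nat.lt_succ_iff.mp hk)]
      rw [Finset.prod_range_succ']
      have : (if k + 1 < n + 1 then 1 - q (k + 1) else 1) = (if k < n then 1 - q (k + 1) else 1) := by
        simp [Nat.succ_lt_succ_iff]
      rw [this]
      ring

lemma telescope (n : ℕ) : ∀ k, k ≤ n →
    ∏ j ∈ Finset.range k, (((n : ℝ) - j) / ((n : ℝ) + 1 - j)) = ((n : ℝ) + 1 - k) / ((n : ℝ) + 1)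
  | 0, _ => by
    have hne2 : (n : ℝ) + 1 ≠ 0 := by positivity
    simp [div_self hne2]
  | k + 1, hk => by
    have hk' : k ≤ n := Nat.le_of_succ_le hk
    have hne : (n : ℝ) + 1 - k ≠ 0 := by
      have : (k : ℝ) < (n : ℝ) + 1 := by
        exact_mod_cast Nat.lt_succ_of_le hk'
      linarith
    have hne2 : (n : ℝ) + 1 ≠ 0 := by positivity
    rw [Finset.prod_range_succ, telescope n k hk']
    push_cast
    field_simp
    ring

lemma chain_sum (n k : ℕ) (hk : k ≤ n) :
    ∑ ω : Fin n → Bool,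
      (if runLen ω = k then
        lazyWeight (fun i : Fin n => ((n : ℝ) - (i : ℕ)) / ((n : ℝ) + 1 - (i : ℕ))) ω else 0)
      = 1 / ((n : ℝ) + 1) := by
  rw [sum_runLen n (fun m => ((n : ℝ) - m) / ((n : ℝ) + 1 - m)) k hk, telescope n k hk]
  have hne2 : (n : ℝ) + 1 ≠ 0 := by positivity
  rcases lt_or_eq_of_le hk with h | h
  · have hne : (n : ℝ) + 1 - k ≠ 0 := by
      have : (k : ℝ) < (n : ℝ) + 1 := by exact_mod_cast Nat.lt_succ_of_le hk
      linarith
    rw [if_pos h]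
    field_simp
    ring
  · subst h
    rw [if_neg (lt_irrefl _)]
    field_simp
    ring

lemma lift_sum {n ℓ : ℕ} (a b : Fin ℓ → Fin n) (p : Fin ℓ → ℝ)
    (hsum : ∀ α : Equiv.Perm (Fin n),
      ∑ ω ∈ univ.filter fun ω : Fin ℓ → Bool => lazyPerm a b ω = α,
        lazyWeight p ω = 1 / (n.factorial : ℝ))
    (β : Perm (Fin (n + 1))) :
    ∑ ω : Fin ℓ → Bool,
      (if liftPerm n (lazyPerm a b ω) = β then lazyWeight p ω else 0)
      = if β 0 = 0 then 1 / (n.factorial : ℝ) else 0 := by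
  by_cases h : β 0 = 0
  · obtain ⟨σ₀, rfl⟩ := liftPerm_surj_on_stab β h
    rw [if_pos (liftPerm_apply_zero σ₀)]
    have hcond : ∀ ω : Fin ℓ → Bool,
        (liftPerm n (lazyPerm a b ω) = liftPerm n σ₀) = (lazyPerm a b ω = σ₀) := by
      intro ω
      simp [(liftPerm_injective n).eq_iff]
    simp only [hcond]
    rw [← Finset.sum_filter]
    exact hsum σ₀
  · rw [if_neg h]
    refine Finset.sum_eq_zero fun ω _ => ?_
    rw [if_neg]
    intro hc
    exact h (by rw [← hc, liftPerm_apply_zero])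

lemma lazyPerm_append {n m ℓ : ℕ} (a₁ b₁ : Fin m → Fin n) (a₂ b₂ : Fin ℓ → Fin n)
    (ω₁ : Fin m → Bool) (ω₂ : Fin ℓ → Bool) :
    lazyPerm (Fin.append a₁ a₂) (Fin.append b₁ b₂) (Fin.append ω₁ ω₂)
      = lazyPerm a₁ b₁ ω₁ * lazyPerm a₂ b₂ ω₂ := by
  have h : (fun i => if Fin.append ω₁ ω₂ i then
        Equiv.swap (Fin.append a₁ a₂ i) (Fin.append b₁ b₂ i) else 1)
      = Fin.append (fun i => if ω₁ i then Equiv.swap (a₁ i) (b₁ i) else 1)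
          (fun i => if ω₂ i then Equiv.swap (a₂ i) (b₂ i) else 1) := by
    funext i
    refine Fin.addCases (fun j => ?_) (fun j => ?_) i <;>
      simp [Fin.append_left, Fin.append_right]
  unfold lazyPerm
  rw [h, List.ofFn_fin_append, List.prod_append]

lemma lazyWeight_append {m ℓ : ℕ} (p₁ : Fin m → ℝ) (p₂ : Fin ℓ → ℝ)
    (ω₁ : Fin m → Bool) (ω₂ : Fin ℓ → Bool) :
    lazyWeight (Fin.append p₁ p₂) (Fin.append ω₁ ω₂) = lazyWeight p₁ ω₁ * lazyWeight p₂ ω₂ := by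
  unfold lazyWeight
  rw [Fin.prod_univ_add]
  congr 1 <;> refine Finset.prod_congr rfl fun i _ => ?_ <;>
    simp [Fin.append_left, Fin.append_right]

lemma q_bounds (n : ℕ) (j : ℕ) (hj : j < n) :
    0 ≤ ((n : ℝ) - j) / ((n : ℝ) + 1 - j) ∧ ((n : ℝ) - j) / ((n : ℝ) + 1 - j) ≤ 1 := by
  have h1 : (j : ℝ) < (n : ℝ) := by exact_mod_cast hj
  constructor
  · apply div_nonneg <;> linarith
  · rw [div_le_one (by linarith)]
    linarith

/-- The inductive construction. -/
lemma shuffle_exists (n : ℕ) :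
    ∃ (a b : Fin (n * (n - 1) / 2) → Fin n) (p : Fin (n * (n - 1) / 2) → ℝ),
      IsTranspositionShuffle n (n * (n - 1) / 2) a b p := by
  induction n with
  | zero =>
    refine ⟨Fin.elim0, Fin.elim0, Fin.elim0, fun i => i.elim0, fun i => i.elim0, fun α => ?_⟩
    have h : (univ.filter fun ω : Fin 0 → Bool => lazyPerm Fin.elim0 Fin.elim0 ω = α) = univ := by
      ext ω
      simp [Subsingleton.elim (lazyPerm Fin.elim0 Fin.elim0 ω) α]
    rw [h]
    have : ∀ ω : Fin 0 → Bool, lazyWeight Fin.elim0 ω = 1 := by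
      intro ω; unfold lazyWeight; simp
    rw [Finset.sum_congr rfl fun ω _ => this ω]
    simp
  | succ n IH =>
    obtain ⟨a, b, p, ha, hp, hsum⟩ := IH
    have hlen : (n + 1) * ((n + 1) - 1) / 2 = n * (n - 1) / 2 + n := by
      rw [← Nat.choose_two_right, ← Nat.choose_two_right]
      rw [show (2 : ℕ) = 1 + 1 from rfl, Nat.choose_succ_succ, Nat.choose_one_right,
        Nat.add_comm]
    rw [hlen]
    refine ⟨Fin.append (fun i => (a i).succ) Fin.castSucc,
      Fin.append (fun i => (b i).succ) Fin.succ,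
      Fin.append p (fun i : Fin n => ((n : ℝ) - (i : ℕ)) / ((n : ℝ) + 1 - (i : ℕ))),
      ?_, ?_, ?_⟩
    · intro i
      refine Fin.addCases (fun j => ?_) (fun j => ?_) i
      · simp only [Fin.append_left]
        exact fun hc => ha j (Fin.succ_injective _ hc)
      · simp only [Fin.append_right]
        exact (Fin.castSucc_lt_succ (i := j)).ne
    · intro i
      refine Fin.addCases (fun j => ?_) (fun j => ?_) i
      · simp only [Fin.append_left]
        exact hp j
      · simp only [Fin.append_right]
        exact q_bounds n j j.isLt
    · intro α
      rw [Finset.sum_filter,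
        ← Equiv.sum_comp (Fin.appendEquiv (n * (n - 1) / 2) n)
          (fun ω => if lazyPerm (Fin.append (fun i => (a i).succ) Fin.castSucc)
              (Fin.append (fun i => (b i).succ) Fin.succ) ω = α
            then lazyWeight
              (Fin.append p fun i : Fin n => ((n : ℝ) - (i : ℕ)) / ((n : ℝ) + 1 - (i : ℕ))) ω
            else 0),
        Fintype.sum_prod_type]
      have hterm : ∀ (ω₁ : Fin (n * (n - 1) / 2) → Bool) (ω₂ : Fin n → Bool),
          (if lazyPerm (Fin.append (fun i => (a i).succ) Fin.castSucc)
              (Fin.append (fun i => (b i).succ) Fin.succ) (Fin.appendEquiv (n * (n - 1) / 2) n (ω₁, ω₂)) = α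
            then lazyWeight
              (Fin.append p fun i : Fin n => ((n : ℝ) - (i : ℕ)) / ((n : ℝ) + 1 - (i : ℕ)))
              (Fin.appendEquiv (n * (n - 1) / 2) n (ω₁, ω₂))
            else 0)
          = (if liftPerm n (lazyPerm a b ω₁)
                = α * (lazyPerm Fin.castSucc Fin.succ ω₂)⁻¹ then lazyWeight p ω₁ else 0)
              * lazyWeight (fun i : Fin n => ((n : ℝ) - (i : ℕ)) / ((n : ℝ) + 1 - (i : ℕ))) ω₂ := by
        intro ω₁ ω₂
        have happ : (Fin.appendEquiv (n * (n - 1) / 2) n) (ω₁, ω₂) = Fin.append ω₁ ω₂ := rfl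
        rw [happ, lazyPerm_append, lazyWeight_append, lazyPerm_lift]
        simp only [eq_mul_inv_iff_mul_eq]
        split <;> ring
      rw [Finset.sum_congr rfl fun ω₁ _ => Finset.sum_congr rfl fun ω₂ _ => hterm ω₁ ω₂]
      rw [Finset.sum_comm]
      have hinner : ∀ ω₂ : Fin n → Bool,
          ∑ ω₁ : Fin (n * (n - 1) / 2) → Bool,
            (if liftPerm n (lazyPerm a b ω₁)
                = α * (lazyPerm Fin.castSucc Fin.succ ω₂)⁻¹ then lazyWeight p ω₁ else 0)
              * lazyWeight (fun i : Fin n => ((n : ℝ) - (i : ℕ)) / ((n : ℝ) + 1 - (i : ℕ))) ω₂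
          = (if runLen ω₂ = ((α⁻¹ 0 : Fin (n + 1)) : ℕ) then
              lazyWeight (fun i : Fin n => ((n : ℝ) - (i : ℕ)) / ((n : ℝ) + 1 - (i : ℕ))) ω₂
              else 0) * (1 / (n.factorial : ℝ)) := by
        intro ω₂
        rw [← Finset.sum_mul, lift_sum a b p hsum]
        have hcond : ((α * (lazyPerm Fin.castSucc Fin.succ ω₂)⁻¹) 0 = 0)
            = (runLen ω₂ = ((α⁻¹ 0 : Fin (n + 1)) : ℕ)) := by
          rw [Equiv.Perm.mul_apply, chain_inv_apply_zero]
          refine propext ⟨fun hc => ?_, fun hc => ?_⟩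
          · have := congrArg (α⁻¹ : Perm (Fin (n + 1))) hc
            rw [← Equiv.Perm.mul_apply, inv_mul_cancel, Equiv.Perm.one_apply] at this
            rw [← this]
          · have : (⟨runLen ω₂, runLen_lt ω₂⟩ : Fin (n + 1)) = α⁻¹ 0 := by
              exact Fin.ext hc
            rw [this, ← Equiv.Perm.mul_apply, mul_inv_cancel, Equiv.Perm.one_apply]
        simp only [hcond]
        split <;> ring
      rw [Finset.sum_congr rfl fun ω₂ _ => hinner ω₂, ← Finset.sum_mul,
        chain_sum n ((α⁻¹ 0 : Fin (n + 1)) : ℕ) (Nat.lt_succ_iff.mp (α⁻¹ 0).isLt)]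
      rw [Nat.factorial_succ]
      push_cast
      have h1 : (n.factorial : ℝ) ≠ 0 := by positivity
      have h2 : (n : ℝ) + 1 ≠ 0 := by positivity
      field_simp

end Aux

/-- for every `n ≥ 1` there is a transposition shuffle of order `n`
of length `n(n-1)/2`. -/
theorem exists_shuffle_of_length_choose_two (n : ℕ) (hn : 1 ≤ n) :
    ∃ (a b : Fin (n * (n - 1) / 2) → Fin n) (p : Fin (n * (n - 1) / 2) → ℝ),
      IsTranspositionShuffle n (n * (n - 1) / 2) a b p :=
  shuffle_exists n
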